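/- Fix n ≥ 1 relays with path gains a_k > 0 (source A to relay k) and b_k > 0 (relay k to source B), and let G_1, …, G_n, H_1, …, H_n be mutually independent unit-rate exponential fading powers. Let K* be the (almost surely unique) index maximizing min(a_k G_k, b_k H_k) over k = 1, …, n. Let τ_f, τ_b ∈ (0,1) with τ_f + τ_b = 1, let μ > 0, and let 0 < m < (2/3)·min{(1+μ)τ_f, (1+1/μ)τ_b}. For γ > 1 define I_1(γ) = log(1 + γ ∑_k a_k G_k), I_2(γ) = log(1 + γ ∑_k b_k H_k), Ĩ_1(γ) = log(1 + γ a_{K*} G_{K*}), Ĩ_2(γ) = log(1 + γ b_{K*} H_{K*}), and the outage probability ε(γ) = P[ {(2τ_f/3)·min(I_1, Ĩ_1, Ĩ_2) < (m/(1+μ)) log γ} ∪ {(2τ_b/3)·min(I_2, Ĩ_1, Ĩ_2) < (m/(1+1/μ)) log γ} ]. Then limsup_{γ→∞} log ε(γ)/log γ ≤ −n·(1 − 3m / (2·min{(1+μ)τ_f, (1+1/μ)τ_b})); that is, network coding with collaborative reception and an optimally selected broadcast relay achieves diversity gain at least n·(1 − 3m/(2 min{(1+μ)τ_f, (1+1/μ)τ_b}))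 at multiplexing gain m. -/

import Mathlib

open MeasureTheory ProbabilityTheory Filter

/-- A real random variable `g` is unit-rate exponential (w.r.t. measure `ℙ`) if
`ℙ[g > x] = e^{-x}` for all `x ≥ 0`. -/
def IsUnitExp {Ω : Type*} [MeasureSpace Ω] (g : Ω → ℝ) : Prop :=
  ∀ x : ℝ, 0 ≤ x → ℙ {ω | x < g ω} = ENNReal.ofReal (Real.exp (-x))

section Aux

variable {Ω : Type*} [MeasureSpace Ω] [IsProbabilityMeasure (ℙ : Measure Ω)]

lemma exp_nonpos_null {g : Ω → ℝ} (hm : Measurable g) (hg : IsUnitExp g) :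
    ℙ {ω | g ω ≤ 0} = 0 := by
  have h0 : ℙ {ω | (0:ℝ) < g ω} = 1 := by
    simpa using hg 0 le_rfl
  have hms : MeasurableSet {ω | (0:ℝ) < g ω} := hm measurableSet_Ioi
  have : {ω | g ω ≤ 0} = {ω | (0:ℝ) < g ω}ᶜ := by
    ext ω; simp [not_lt]
  rw [this, measure_compl hms (measure_ne_top _ _), h0, measure_univ]
  simp

lemma exp_cdf_le {g : Ω → ℝ} (hm : Measurable g) (hg : IsUnitExp g) {x : ℝ} (hx : 0 ≤ x) :
    ℙ (g ⁻¹' Set.Iio x) ≤ ENNReal.ofReal x := by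
  have hms : MeasurableSet {ω | x < g ω} := hm measurableSet_Ioi
  have hsub : g ⁻¹' Set.Iio x ⊆ {ω | x < g ω}ᶜ := by
    intro ω hω; simp only [Set.mem_compl_iff, Set.mem_setOf_eq, not_lt]
    exact le_of_lt hω
  calc ℙ (g ⁻¹' Set.Iio x) ≤ ℙ ({ω | x < g ω}ᶜ) := measure_mono hsub
    _ = 1 - ENNReal.ofReal (Real.exp (-x)) := by
        rw [measure_compl hms (measure_ne_top _ _), hg x hx, measure_univ]
    _ ≤ ENNReal.ofReal x := by
        rw [tsub_le_iff_right, ← ENNReal.ofReal_add hx (Real.exp_nonneg _), ← ENNReal.ofReal_one]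
        exact ENNReal.ofReal_le_ofReal (by nlinarith [Real.add_one_le_exp (-x)])

lemma exp_cdf_ge {g : Ω → ℝ} (hg : IsUnitExp g) {s : ℝ} (hs : 0 < s) :
    ENNReal.ofReal (1 - Real.exp (-(s/2))) ≤ ℙ (g ⁻¹' Set.Ioo 0 s) := by
  have hsub : {ω | (0:ℝ) < g ω} \ {ω | s/2 < g ω} ⊆ g ⁻¹' Set.Ioo 0 s := by
    rintro ω ⟨h1, h2⟩
    simp only [Set.mem_setOf_eq, not_lt] at h1 h2
    exact ⟨h1, lt_of_le_of_lt h2 (by linarith)⟩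
  have h0 : ℙ {ω | (0:ℝ) < g ω} = 1 := by simpa using hg 0 le_rfl
  have h2 : ℙ {ω | s/2 < g ω} = ENNReal.ofReal (Real.exp (-(s/2))) := hg _ (by linarith)
  have hmono := measure_mono (μ := (ℙ : Measure Ω)) hsub
  have hd : (1:ENNReal) ≤ ℙ ({ω | (0:ℝ) < g ω} \ {ω | s/2 < g ω}) + ENNReal.ofReal (Real.exp (-(s/2))) := by
    rw [← h2, ← h0]
    calc ℙ {ω | (0:ℝ) < g ω} ≤ ℙ (({ω | (0:ℝ) < g ω} \ {ω | s/2 < g ω}) ∪ {ω | s/2 < g ω}) :=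
          measure_mono (by intro ω h; by_cases hc : s/2 < g ω <;> [right; left] <;> simp_all)
      _ ≤ _ := measure_union_le _ _
  calc ENNReal.ofReal (1 - Real.exp (-(s/2)))
      = 1 - ENNReal.ofReal (Real.exp (-(s/2))) := by
        rw [ENNReal.ofReal_sub _ (Real.exp_nonneg _)]; simp
    _ ≤ ℙ ({ω | (0:ℝ) < g ω} \ {ω | s/2 < g ω}) := by
        rw [tsub_le_iff_right]; exact hd
    _ ≤ _ := hmono

lemma inter_min_lt_le {n : ℕ} (a b : Fin n → ℝ) (G H : Fin n → Ω → ℝ)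
    (ha : ∀ k, 0 < a k) (hb : ∀ k, 0 < b k)
    (hGmeas : ∀ k, Measurable (G k)) (hHmeas : ∀ k, Measurable (H k))
    (hindep : iIndepFun (Sum.elim G H) ℙ)
    (hGexp : ∀ k, IsUnitExp (G k)) (hHexp : ∀ k, IsUnitExp (H k))
    {t : ℝ} (ht : 0 ≤ t) :
    ℙ {ω | ∀ k, min (a k * G k ω) (b k * H k ω) < t}
      ≤ ENNReal.ofReal (2^n * ∏ k, (t * max (a k)⁻¹ (b k)⁻¹)) := by
  classical
  set c : Fin n → ℝ := fun k => max (a k)⁻¹ (b k)⁻¹ with hc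
  set sets : (Fin n → Bool) → (Fin n ⊕ Fin n) → Set ℝ := fun φ =>
    Sum.elim (fun k => if φ k then Set.Iio (t / a k) else Set.univ)
             (fun k => if φ k then Set.univ else Set.Iio (t / b k)) with hsets
  have hcover : {ω | ∀ k, min (a k * G k ω) (b k * H k ω) < t}
      ⊆ ⋃ φ ∈ (Finset.univ : Finset (Fin n → Bool)), ⋂ i, (Sum.elim G H i) ⁻¹' sets φ i := by
    intro ω hω
    simp only [Set.mem_iUnion, Finset.mem_univ, exists_prop, true_and]
    refine ⟨fun k => decide (a k * G k ω < t), ?_⟩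
    simp only [Set.mem_iInter]
    rintro (k | k)
    · by_cases hφ : a k * G k ω < t
      · simp only [hsets, Sum.elim_inl, hφ, decide_true, if_pos (decide_eq_true hφ)]
        simpa [Set.mem_Iio, lt_div_iff₀ (ha k), mul_comm] using hφ
      · simp [hsets, hφ]
    · by_cases hφ : a k * G k ω < t
      · simp [hsets, hφ]
      · have hmin := hω k
        have : b k * H k ω < t := by
          rcases min_lt_iff.mp hmin with h | h
          · exact absurd h hφ
          · exact h
        simp only [hsets, Sum.elim_inr, if_neg (show ¬(decide (a k * G k ω < t) = true) by simp [hφ])]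
        simpa [Set.mem_Iio, lt_div_iff₀ (hb k), mul_comm] using this
  calc ℙ {ω | ∀ k, min (a k * G k ω) (b k * H k ω) < t}
      ≤ ℙ (⋃ φ ∈ (Finset.univ : Finset (Fin n → Bool)), ⋂ i, (Sum.elim G H i) ⁻¹' sets φ i) :=
        measure_mono hcover
    _ ≤ ∑ φ : Fin n → Bool, ℙ (⋂ i, (Sum.elim G H i) ⁻¹' sets φ i) :=
        measure_biUnion_finset_le _ _
    _ ≤ ∑ _φ : Fin n → Bool, ENNReal.ofReal (∏ k, (t * c k)) := by
        refine Finset.sum_le_sum fun φ _ => ?_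
        have hprod : ℙ (⋂ i, (Sum.elim G H i) ⁻¹' sets φ i)
            = ∏ i, ℙ ((Sum.elim G H i) ⁻¹' sets φ i) := by
          have hmeas : ∀ i : Fin n ⊕ Fin n, i ∈ (Finset.univ : Finset (Fin n ⊕ Fin n)) →
              MeasurableSet (sets φ i) := by
            rintro (k | k) _ <;> by_cases hφ : φ k <;>
              simp [hsets, hφ, measurableSet_Iio]
          have := hindep.measure_inter_preimage_eq_mul Finset.univ hmeas
          simpa using this
        rw [hprod, Fintype.prod_sum_type, ← Finset.prod_mul_distrib,
          ENNReal.ofReal_prod_of_nonneg (fun k _ =>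
            mul_nonneg ht (le_trans (le_of_lt (inv_pos.mpr (ha k))) (le_max_left _ _)))]
        refine Finset.prod_le_prod' fun k _ => ?_
        by_cases hφ : φ k
        · have h1 : ℙ ((Sum.elim G H (Sum.inr k)) ⁻¹' sets φ (Sum.inr k)) = 1 := by
            simp [hsets, hφ]
          rw [h1, mul_one]
          have h2 : ℙ ((Sum.elim G H (Sum.inl k)) ⁻¹' sets φ (Sum.inl k))
              ≤ ENNReal.ofReal (t / a k) := by
            simp only [hsets, Sum.elim_inl, hφ, if_true]
            exact exp_cdf_le (hGmeas k) (hGexp k) (div_nonneg ht (le_of_lt (ha k)))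
          refine le_trans h2 (ENNReal.ofReal_le_ofReal ?_)
          rw [div_eq_mul_inv]
          exact mul_le_mul_of_nonneg_left (le_max_left _ _) ht
        · have h1 : ℙ ((Sum.elim G H (Sum.inl k)) ⁻¹' sets φ (Sum.inl k)) = 1 := by
            simp [hsets, hφ]
          rw [h1, one_mul]
          have h2 : ℙ ((Sum.elim G H (Sum.inr k)) ⁻¹' sets φ (Sum.inr k))
              ≤ ENNReal.ofReal (t / b k) := by
            simp only [hsets, Sum.elim_inr, hφ, if_false]
            exact exp_cdf_le (hHmeas k) (hHexp k) (div_nonneg ht (le_of_lt (hb k)))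
          refine le_trans h2 (ENNReal.ofReal_le_ofReal ?_)
          rw [div_eq_mul_inv]
          exact mul_le_mul_of_nonneg_left (le_max_right _ _) ht
    _ = ENNReal.ofReal (2^n * ∏ k, (t * c k)) := by
        rw [Finset.sum_const, Finset.card_univ]
        have hcard : Fintype.card (Fin n → Bool) = 2^n := by simp
        rw [hcard, nsmul_eq_mul]
        rw [← ENNReal.ofReal_natCast (2^n), ← ENNReal.ofReal_mul (by positivity)]
        norm_num

lemma inter_ioo_ge {n : ℕ} (G H : Fin n → Ω → ℝ)
    (hindep : iIndepFun (Sum.elim G H) ℙ)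
    (hGexp : ∀ k, IsUnitExp (G k)) (hHexp : ∀ k, IsUnitExp (H k))
    {s : ℝ} (hs : 0 < s) :
    ENNReal.ofReal ((1 - Real.exp (-(s/2)))^(n+n))
      ≤ ℙ {ω | ∀ k, G k ω ∈ Set.Ioo 0 s ∧ H k ω ∈ Set.Ioo 0 s} := by
  have hset : {ω | ∀ k, G k ω ∈ Set.Ioo 0 s ∧ H k ω ∈ Set.Ioo 0 s}
      = ⋂ i, (Sum.elim G H i) ⁻¹' Set.Ioo 0 s := by
    ext ω
    simp only [Set.mem_setOf_eq, Set.mem_iInter, Sum.forall, Sum.elim_inl, Sum.elim_inr,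
      Set.mem_preimage]
    exact ⟨fun h => ⟨fun k => (h k).1, fun k => (h k).2⟩, fun ⟨h1, h2⟩ k => ⟨h1 k, h2 k⟩⟩
  have hprod : ℙ (⋂ i, (Sum.elim G H i) ⁻¹' Set.Ioo 0 s)
      = ∏ i, ℙ ((Sum.elim G H i) ⁻¹' Set.Ioo 0 s) := by
    have := hindep.measure_inter_preimage_eq_mul (sets := fun _ => Set.Ioo 0 s) Finset.univ
      (fun i _ => measurableSet_Ioo)
    simpa using this
  rw [hset, hprod]
  have hnn : 0 ≤ 1 - Real.exp (-(s/2)) := by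
    have : Real.exp (-(s/2)) ≤ 1 := Real.exp_le_one_iff.mpr (by linarith)
    linarith
  calc ENNReal.ofReal ((1 - Real.exp (-(s/2)))^(n+n))
      = ∏ _i : Fin n ⊕ Fin n, ENNReal.ofReal (1 - Real.exp (-(s/2))) := by
        rw [Finset.prod_const, Finset.card_univ, ENNReal.ofReal_pow hnn]
        simp [Fintype.card_sum]
    _ ≤ ∏ i, ℙ ((Sum.elim G H i) ⁻¹' Set.Ioo 0 s) := by
        refine Finset.prod_le_prod' fun i _ => ?_
        rcases i with k | k
        · exact exp_cdf_ge (hGexp k) hs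
        · exact exp_cdf_ge (hHexp k) hs

lemma one_sub_exp_neg_ge {x : ℝ} (h0 : 0 ≤ x) (h1 : x ≤ 1) : x/2 ≤ 1 - Real.exp (-x) := by
  have hx1 : (1+x) * Real.exp (-x) ≤ 1 := by
    calc (1+x) * Real.exp (-x) ≤ Real.exp x * Real.exp (-x) :=
          mul_le_mul_of_nonneg_right (by linarith [Real.add_one_le_exp x]) (Real.exp_nonneg _)
      _ = 1 := by rw [← Real.exp_add]; simp
  nlinarith [Real.exp_pos (-x)]

end Aux
set_option maxHeartbeats 2000000 in
/-- diversity-multiplexing tradeoff of network coding with collaborative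
reception and an optimally selected broadcast relay `K*` (maximizing
`min(a_k G_k, b_k H_k)`): the bidirectional outage probability with
`I_1 = log(1 + γ ∑ a_k G_k)`, `I_2 = log(1 + γ ∑ b_k H_k)`,
`Ĩ_1 = log(1 + γ a_{K*} G_{K*})`, `Ĩ_2 = log(1 + γ b_{K*} H_{K*})` satisfies
`limsup_{γ→∞} log ε(γ)/log γ ≤ −n(1 − 3m/(2 min{(1+μ)τ_f, (1+1/μ)τ_b}))`. -/
theorem nc_optimal_broadcast_relay_dmt
    {Ω : Type*} [MeasureSpace Ω] [IsProbabilityMeasure (ℙ : Measure Ω)]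
    (n : ℕ) (hn : 1 ≤ n) (a b : Fin n → ℝ) (G H : Fin n → Ω → ℝ)
    (ha : ∀ k, 0 < a k) (hb : ∀ k, 0 < b k)
    (hGmeas : ∀ k, Measurable (G k)) (hHmeas : ∀ k, Measurable (H k))
    (hindep : iIndepFun (Sum.elim G H) ℙ)
    (hGexp : ∀ k, IsUnitExp (G k)) (hHexp : ∀ k, IsUnitExp (H k))
    (K : Ω → Fin n) (hKmeas : Measurable K)
    (hK : ∀ ω k, min (a k * G k ω) (b k * H k ω)
            ≤ min (a (K ω) * G (K ω) ω) (b (K ω) * H (K ω) ω))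
    (τf τb μ m : ℝ)
    (hτf : 0 < τf ∧ τf < 1) (hτb : 0 < τb ∧ τb < 1) (hτ : τf + τb = 1)
    (hμ : 0 < μ)
    (hm : 0 < m) (hm' : m < (2/3) * min ((1 + μ) * τf) ((1 + 1/μ) * τb)) :
    limsup (fun γ : ℝ =>
        Real.log (ℙ {ω |
            (2 * τf / 3) * min (Real.log (1 + γ * ∑ k, a k * G k ω))
                (min (Real.log (1 + γ * (a (K ω) * G (K ω) ω)))
                     (Real.log (1 + γ * (b (K ω) * H (K ω) ω))))
              < (m / (1 + μ)) * Real.log γ ∨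
            (2 * τb / 3) * min (Real.log (1 + γ * ∑ k, b k * H k ω))
                (min (Real.log (1 + γ * (a (K ω) * G (K ω) ω)))
                     (Real.log (1 + γ * (b (K ω) * H (K ω) ω))))
              < (m / (1 + 1/μ)) * Real.log γ}).toReal / Real.log γ) atTop
      ≤ -((n : ℝ) * (1 - 3 * m / (2 * min ((1 + μ) * τf) ((1 + 1/μ) * τb)))) := by
  classical
  obtain ⟨hτf0, hτf1⟩ := hτf
  obtain ⟨hτb0, hτb1⟩ := hτb
  have hμ1 : (0:ℝ) < 1 + μ := by linarith
  have hμinv : (0:ℝ) < 1/μ := by positivity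
  have hμ2 : (0:ℝ) < 1 + 1/μ := by linarith
  set M := min ((1 + μ) * τf) ((1 + 1/μ) * τb) with hMdef
  have hMpos : 0 < M := lt_min (by positivity) (by positivity)
  have hMP : M ≤ (1 + μ) * τf := min_le_left _ _
  have hMQ : M ≤ (1 + 1/μ) * τb := min_le_right _ _
  set r := 3 * m / (2 * M) with hrdef
  have hr : 0 < r := by positivity
  have hnon : Nonempty (Fin n) := ⟨⟨0, hn⟩⟩
  set A := ∑ k, a k with hAdef
  have hApos : 0 < A := Finset.sum_pos (fun k _ => ha k) Finset.univ_nonempty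
  set C := (2:ℝ)^n * ∏ k, max (a k)⁻¹ (b k)⁻¹ with hCdef
  have hCpos : 0 < C := by
    apply mul_pos (by positivity)
    exact Finset.prod_pos fun k _ => lt_of_lt_of_le (inv_pos.mpr (ha k)) (le_max_left _ _)
  set N := ⋃ k, ({ω : Ω | G k ω ≤ 0} ∪ {ω : Ω | H k ω ≤ 0}) with hNdef
  have hN : ℙ N = 0 := measure_iUnion_null fun k =>
    measure_union_null (exp_nonpos_null (hGmeas k) (hGexp k)) (exp_nonpos_null (hHmeas k) (hHexp k))
  set cA := ((2 * τf / 3) * Real.log (1 + A)) * ((1 + μ) / m) with hcAdef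
  -- the eventual inequalities
  have hev : ∀ᶠ γ : ℝ in atTop,
      (Real.log (ℙ {ω |
            (2 * τf / 3) * min (Real.log (1 + γ * ∑ k, a k * G k ω))
                (min (Real.log (1 + γ * (a (K ω) * G (K ω) ω)))
                     (Real.log (1 + γ * (b (K ω) * H (K ω) ω))))
              < (m / (1 + μ)) * Real.log γ ∨
            (2 * τb / 3) * min (Real.log (1 + γ * ∑ k, b k * H k ω))
                (min (Real.log (1 + γ * (a (K ω) * G (K ω) ω)))
                     (Real.log (1 + γ * (b (K ω) * H (K ω) ω))))
              < (m / (1 + 1/μ)) * Real.log γ}).toReal / Real.log γ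
          ≤ Real.log C / Real.log γ + (r - 1) * n)
      ∧ (-(4 * (n:ℝ)) ≤ Real.log (ℙ {ω |
            (2 * τf / 3) * min (Real.log (1 + γ * ∑ k, a k * G k ω))
                (min (Real.log (1 + γ * (a (K ω) * G (K ω) ω)))
                     (Real.log (1 + γ * (b (K ω) * H (K ω) ω))))
              < (m / (1 + μ)) * Real.log γ ∨
            (2 * τb / 3) * min (Real.log (1 + γ * ∑ k, b k * H k ω))
                (min (Real.log (1 + γ * (a (K ω) * G (K ω) ω)))
                     (Real.log (1 + γ * (b (K ω) * H (K ω) ω))))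
              < (m / (1 + 1/μ)) * Real.log γ}).toReal / Real.log γ) := by
    filter_upwards [eventually_ge_atTop (16:ℝ), Real.tendsto_log_atTop.eventually_gt_atTop cA]
      with γ h16 hcA
    have hγ1 : (1:ℝ) < γ := by linarith
    have hγ0 : (0:ℝ) < γ := by linarith
    have hlog : 0 < Real.log γ := Real.log_pos hγ1
    set S := {ω : Ω |
            (2 * τf / 3) * min (Real.log (1 + γ * ∑ k, a k * G k ω))
                (min (Real.log (1 + γ * (a (K ω) * G (K ω) ω)))
                     (Real.log (1 + γ * (b (K ω) * H (K ω) ω))))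
              < (m / (1 + μ)) * Real.log γ ∨
            (2 * τb / 3) * min (Real.log (1 + γ * ∑ k, b k * H k ω))
                (min (Real.log (1 + γ * (a (K ω) * G (K ω) ω)))
                     (Real.log (1 + γ * (b (K ω) * H (K ω) ω))))
              < (m / (1 + 1/μ)) * Real.log γ} with hSdef
    set t := γ ^ (r - 1) with htdef
    have ht0 : 0 < t := Real.rpow_pos_of_pos hγ0 _
    -- upper inclusion
    have hsub1 : S ⊆ N ∪ {ω | ∀ k, min (a k * G k ω) (b k * H k ω) < t} := by
      intro ω hω
      by_cases hωN : ω ∈ N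
      · exact Or.inl hωN
      refine Or.inr ?_
      have hpos : ∀ k, 0 < G k ω ∧ 0 < H k ω := by
        intro k
        have hk : ω ∉ ({ω : Ω | G k ω ≤ 0} ∪ {ω : Ω | H k ω ≤ 0}) :=
          fun hc => hωN (Set.mem_iUnion.mpr ⟨k, hc⟩)
        simp only [Set.mem_union, Set.mem_setOf_eq, not_or, not_le] at hk
        exact hk
      have hgKpos : 0 < a (K ω) * G (K ω) ω := mul_pos (ha _) (hpos _).1
      have hhKpos : 0 < b (K ω) * H (K ω) ω := mul_pos (hb _) (hpos _).2
      have key : min (Real.log (1 + γ * (a (K ω) * G (K ω) ω)))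
          (Real.log (1 + γ * (b (K ω) * H (K ω) ω))) < r * Real.log γ := by
        rcases hω with h | h
        · have hsum : a (K ω) * G (K ω) ω ≤ ∑ k, a k * G k ω :=
            Finset.single_le_sum (f := fun k => a k * G k ω)
              (fun k _ => le_of_lt (mul_pos (ha k) (hpos k).1)) (Finset.mem_univ (K ω))
          have hI : Real.log (1 + γ * (a (K ω) * G (K ω) ω))
              ≤ Real.log (1 + γ * ∑ k, a k * G k ω) := by
            apply Real.log_le_log (by nlinarith)
            nlinarith
          rw [min_eq_right (le_trans (min_le_left _ _) hI)] at h
          have hd : (0:ℝ) < 2 * τf / 3 := by linarith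
          have hx : min (Real.log (1 + γ * (a (K ω) * G (K ω) ω)))
              (Real.log (1 + γ * (b (K ω) * H (K ω) ω)))
                < ((m / (1 + μ)) * Real.log γ) / (2 * τf / 3) := by
            rw [lt_div_iff₀ hd]
            nlinarith [h]
          refine lt_of_lt_of_le hx ?_
          have h1 : (m / (1 + μ)) / (2 * τf / 3) ≤ r := by
            rw [hrdef]
            calc (m / (1 + μ)) / (2 * τf / 3) = 3 * m / (2 * ((1 + μ) * τf)) := by
                  field_simp
              _ ≤ 3 * m / (2 * M) := by gcongr
          calc ((m / (1 + μ)) * Real.log γ) / (2 * τf / 3)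
              = ((m / (1 + μ)) / (2 * τf / 3)) * Real.log γ := by ring
            _ ≤ r * Real.log γ := mul_le_mul_of_nonneg_right h1 (le_of_lt hlog)
        · have hsum : b (K ω) * H (K ω) ω ≤ ∑ k, b k * H k ω :=
            Finset.single_le_sum (f := fun k => b k * H k ω)
              (fun k _ => le_of_lt (mul_pos (hb k) (hpos k).2)) (Finset.mem_univ (K ω))
          have hI : Real.log (1 + γ * (b (K ω) * H (K ω) ω))
              ≤ Real.log (1 + γ * ∑ k, b k * H k ω) := by
            apply Real.log_le_log (by nlinarith)
            nlinarith
          rw [min_eq_right (le_trans (min_le_right _ _) hI)] at h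
          have hd : (0:ℝ) < 2 * τb / 3 := by linarith
          have hx : min (Real.log (1 + γ * (a (K ω) * G (K ω) ω)))
              (Real.log (1 + γ * (b (K ω) * H (K ω) ω)))
                < ((m / (1 + 1/μ)) * Real.log γ) / (2 * τb / 3) := by
            rw [lt_div_iff₀ hd]
            nlinarith [h]
          refine lt_of_lt_of_le hx ?_
          have h1 : (m / (1 + 1/μ)) / (2 * τb / 3) ≤ r := by
            rw [hrdef]
            calc (m / (1 + 1/μ)) / (2 * τb / 3) = 3 * m / (2 * ((1 + 1/μ) * τb)) := by
                  field_simp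
              _ ≤ 3 * m / (2 * M) := by gcongr
          calc ((m / (1 + 1/μ)) * Real.log γ) / (2 * τb / 3)
              = ((m / (1 + 1/μ)) / (2 * τb / 3)) * Real.log γ := by ring
            _ ≤ r * Real.log γ := mul_le_mul_of_nonneg_right h1 (le_of_lt hlog)
      have hKmin : min (a (K ω) * G (K ω) ω) (b (K ω) * H (K ω) ω) < t := by
        have hconv : ∀ u : ℝ, 0 < u → Real.log (1 + γ * u) < r * Real.log γ → u < t := by
          intro u hu hlogu
          have hexp : 1 + γ * u < γ ^ r := by
            have h2 : Real.exp (Real.log (1 + γ * u)) < Real.exp (r * Real.log γ) :=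
              Real.exp_lt_exp.mpr hlogu
            rwa [Real.exp_log (by nlinarith), mul_comm r (Real.log γ),
              ← Real.rpow_def_of_pos hγ0 r] at h2
          rw [htdef, show r - 1 = r - (1:ℝ) from rfl, Real.rpow_sub hγ0, Real.rpow_one,
            lt_div_iff₀ hγ0]
          nlinarith
        rcases le_total (a (K ω) * G (K ω) ω) (b (K ω) * H (K ω) ω) with hcase | hcase
        · have hle : Real.log (1 + γ * (a (K ω) * G (K ω) ω))
              ≤ Real.log (1 + γ * (b (K ω) * H (K ω) ω)) :=
            Real.log_le_log (by nlinarith) (by nlinarith)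
          rw [min_eq_left hle] at key
          exact lt_of_le_of_lt (min_le_left _ _) (hconv _ hgKpos key)
        · have hle : Real.log (1 + γ * (b (K ω) * H (K ω) ω))
              ≤ Real.log (1 + γ * (a (K ω) * G (K ω) ω)) :=
            Real.log_le_log (by nlinarith) (by nlinarith)
          rw [min_eq_right hle] at key
          exact lt_of_le_of_lt (min_le_right _ _) (hconv _ hhKpos key)
      exact fun k => lt_of_le_of_lt (hK ω k) hKmin
    have hup : ℙ S ≤ ENNReal.ofReal (C * γ ^ ((r - 1) * (n:ℝ))) := by
      refine le_trans (measure_mono hsub1) (le_trans (measure_union_le _ _) ?_)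
      rw [hN, zero_add]
      refine le_trans
        (inter_min_lt_le a b G H ha hb hGmeas hHmeas hindep hGexp hHexp ht0.le) ?_
      apply le_of_eq
      congr 1
      rw [Finset.prod_mul_distrib, Finset.prod_const, Finset.card_univ, Fintype.card_fin]
      rw [hCdef, htdef, ← Real.rpow_natCast (γ ^ (r-1)) n, ← Real.rpow_mul (le_of_lt hγ0)]
      ring
    have hεup : (ℙ S).toReal ≤ C * γ ^ ((r - 1) * (n:ℝ)) :=
      ENNReal.toReal_le_of_le_ofReal
        (le_of_lt (mul_pos hCpos (Real.rpow_pos_of_pos hγ0 _))) hup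
    -- lower bound
    have hsub2 : {ω : Ω | ∀ k, G k ω ∈ Set.Ioo 0 (1/γ) ∧ H k ω ∈ Set.Ioo 0 (1/γ)} ⊆ S := by
      intro ω hω
      refine Or.inl ?_
      have hgKp : 0 < G (K ω) ω := (hω (K ω)).1.1
      have hgKlt : G (K ω) ω < 1/γ := (hω (K ω)).1.2
      have haK : a (K ω) ≤ A := Finset.single_le_sum (f := fun k => a k)
        (fun k _ => le_of_lt (ha k)) (Finset.mem_univ (K ω))
      have hγG : γ * G (K ω) ω < 1 := by
        rw [← lt_div_iff₀' hγ0]; exact hgKlt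
      have h1 : 1 + γ * (a (K ω) * G (K ω) ω) ≤ 1 + A := by
        nlinarith [ha (K ω)]
      have hlog1 : Real.log (1 + γ * (a (K ω) * G (K ω) ω)) ≤ Real.log (1 + A) :=
        Real.log_le_log (by nlinarith [mul_pos hγ0 (mul_pos (ha (K ω)) hgKp)]) h1
      calc (2 * τf / 3) * min (Real.log (1 + γ * ∑ k, a k * G k ω))
                (min (Real.log (1 + γ * (a (K ω) * G (K ω) ω)))
                     (Real.log (1 + γ * (b (K ω) * H (K ω) ω))))
          ≤ (2 * τf / 3) * Real.log (1 + A) := by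
            apply mul_le_mul_of_nonneg_left _ (by linarith)
            exact le_trans (le_trans (min_le_right _ _) (min_le_left _ _)) hlog1
        _ < (m / (1 + μ)) * Real.log γ := by
            have hmul := mul_lt_mul_of_pos_left hcA (show (0:ℝ) < m / (1 + μ) by positivity)
            have heq : (m / (1 + μ)) * cA = (2 * τf / 3) * Real.log (1 + A) := by
              rw [hcAdef]
              field_simp
            linarith [hmul, heq.symm.le, heq.le]
    have hlow : ENNReal.ofReal ((1 - Real.exp (-(1/γ/2)))^(n+n)) ≤ ℙ S :=
      le_trans (inter_ioo_ge G H hindep hGexp hHexp (by positivity)) (measure_mono hsub2)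
    have hqle : (1/(4*γ)) ≤ 1 - Real.exp (-(1/γ/2)) := by
      have := one_sub_exp_neg_ge (x := 1/γ/2) (by positivity) (by
        rw [div_le_one (by norm_num : (0:ℝ) < 2)]
        rw [div_le_iff₀ hγ0]
        linarith)
      calc (1/(4*γ)) = (1/γ/2)/2 := by ring
        _ ≤ 1 - Real.exp (-(1/γ/2)) := this
    have hεlow : (1/(4*γ))^(n+n) ≤ (ℙ S).toReal := by
      rw [← ENNReal.ofReal_le_iff_le_toReal (measure_ne_top _ _)]
      refine le_trans (ENNReal.ofReal_le_ofReal ?_) hlow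
      exact pow_le_pow_left₀ (by positivity) hqle _
    have hεpos : 0 < (ℙ S).toReal := lt_of_lt_of_le (by positivity) hεlow
    constructor
    · have hlogε : Real.log (ℙ S).toReal ≤ Real.log C + ((r - 1) * n) * Real.log γ := by
        calc Real.log (ℙ S).toReal ≤ Real.log (C * γ ^ ((r - 1) * (n:ℝ))) :=
              Real.log_le_log hεpos hεup
          _ = Real.log C + Real.log (γ ^ ((r - 1) * (n:ℝ))) :=
              Real.log_mul (ne_of_gt hCpos) (ne_of_gt (Real.rpow_pos_of_pos hγ0 _))
          _ = Real.log C + ((r - 1) * n) * Real.log γ := by rw [Real.log_rpow hγ0]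
      calc Real.log (ℙ S).toReal / Real.log γ
          ≤ (Real.log C + ((r - 1) * n) * Real.log γ) / Real.log γ := by
            exact div_le_div_of_nonneg_right hlogε hlog.le
        _ = Real.log C / Real.log γ + (r - 1) * n := by
            field_simp
    · have h1 : Real.log ((1/(4*γ))^(n+n)) ≤ Real.log (ℙ S).toReal :=
        Real.log_le_log (by positivity) hεlow
      have h2 : Real.log ((1/(4*γ))^(n+n)) = -(((n:ℝ)+n) * Real.log (4*γ)) := by
        rw [Real.log_pow, one_div, Real.log_inv]
        push_cast
        ring
      have h3 : Real.log (4*γ) ≤ 2 * Real.log γ := by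
        have h4 : 4*γ ≤ γ^2 := by nlinarith
        calc Real.log (4*γ) ≤ Real.log (γ^2) := Real.log_le_log (by linarith) h4
          _ = 2 * Real.log γ := by
            rw [Real.log_pow]; push_cast; ring
      have h5 : -(4 * (n:ℝ)) * Real.log γ ≤ Real.log (ℙ S).toReal := by
        rw [h2] at h1
        nlinarith [h1, h3]
      calc -(4 * (n:ℝ)) = (-(4 * (n:ℝ)) * Real.log γ) / Real.log γ := by
            field_simp
        _ ≤ Real.log (ℙ S).toReal / Real.log γ := div_le_div_of_nonneg_right h5 hlog.le
  -- conclude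
  have htend : Tendsto (fun γ : ℝ => Real.log C / Real.log γ + (r - 1) * n) atTop
      (nhds (0 + (r - 1) * n)) := by
    exact (Tendsto.div_atTop tendsto_const_nhds Real.tendsto_log_atTop).add tendsto_const_nhds
  calc limsup _ atTop
      ≤ limsup (fun γ : ℝ => Real.log C / Real.log γ + (r - 1) * n) atTop := by
        refine limsup_le_limsup (hev.mono fun γ h => h.1) ?_ ?_
        · exact isCoboundedUnder_le_of_eventually_le atTop (hev.mono fun γ h => h.2)
        · exact htend.isBoundedUnder_le
    _ = 0 + (r - 1) * n := htend.limsup_eq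
    _ = -((n : ℝ) * (1 - 3 * m / (2 * M))) := by rw [hrdef]; ring
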